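/- Fix a deterministic input sequence with ‖u_t‖₂ ≤ β for all t, and assume the noise assumption and the stability assumption. Then for every τ ≥ L, the variance of the effective noise satisfies Var(ζ_{τ+1}) = E[ζ_{τ+1}²] − (E[ζ_{τ+1}])² ≤ ( ‖Σ_w‖ ‖F‖_F² + ‖C Aᴸ‖² ‖Γ_w^∞‖ ) β² + σ_z². -/

import Mathlib

open MeasureTheory ProbabilityTheory Matrix Finset

noncomputable section

/-- Frobenius norm of a real matrix. -/
def frobNorm {m k : Type*} [Fintype m] [Fintype k] (M : Matrix m k ℝ) : ℝ :=
  Real.sqrt (∑ i, ∑ j, M i j ^ 2)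

/-- Spectral (ℓ²-operator) norm of a real matrix. -/
def specNorm {m k : Type*} [Fintype m] [Fintype k] [DecidableEq k]
    (M : Matrix m k ℝ) : ℝ :=
  ‖LinearMap.toContinuousLinearMap (Matrix.toEuclideanLin M)‖

/-- Euclidean norm of a vector. -/
def vecNorm {k : Type*} [Fintype k] (v : k → ℝ) : ℝ :=
  Real.sqrt (∑ i, v i ^ 2)

/-- Ellipsoidal norm `‖v‖_M = √(vᵀ M v)`. -/
def mnorm {k : Type*} [Fintype k] (M : Matrix k k ℝ) (v : k → ℝ) : ℝ :=
  Real.sqrt (v ⬝ᵥ (M *ᵥ v))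

/-- Kronecker product of two vectors. -/
def vkron {a b : Type*} (x : a → ℝ) (y : b → ℝ) : a × b → ℝ := fun i => x i.1 * y i.2

/-- Smallest eigenvalue of a symmetric matrix, as the infimum of the Rayleigh
quotient over unit vectors. -/
def lambdaMin {κ : Type*} [Fintype κ] (M : Matrix κ κ ℝ) : ℝ :=
  sInf {r : ℝ | ∃ v : κ → ℝ, ∑ i, v i ^ 2 = 1 ∧ r = v ⬝ᵥ (M *ᵥ v)}

/-- The history vector `ū_t = (u_t, u_{t-1}, …, u_{t-L+1})`, block `i` being `u_{t-i}`. -/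
def ubar {p : ℕ} (L : ℕ) (u : ℕ → Fin p → ℝ) (t : ℕ) : Fin L × Fin p → ℝ :=
  fun i => u (t - (i.1 : ℕ)) i.2

/-- The state sequence of the system `x_{t+1} = A x_t + B u_t + w_t`, `x_0 = 0`. -/
def state {Ω : Type*} {n p : ℕ} (A : Matrix (Fin n) (Fin n) ℝ)
    (B : Matrix (Fin n) (Fin p) ℝ) (u : ℕ → Fin p → ℝ) (w : ℕ → Ω → Fin n → ℝ) :
    ℕ → Ω → Fin n → ℝ
  | 0 => fun _ => 0
  | t + 1 => fun ω => A *ᵥ state A B u w t ω + B *ᵥ u t + w t ω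

/-- The output `y_t = u_tᵀ C x_t + z_t`. -/
def output {Ω : Type*} {n p : ℕ} (A : Matrix (Fin n) (Fin n) ℝ)
    (B : Matrix (Fin n) (Fin p) ℝ) (C : Matrix (Fin p) (Fin n) ℝ)
    (u : ℕ → Fin p → ℝ) (w : ℕ → Ω → Fin n → ℝ) (z : ℕ → Ω → ℝ) (t : ℕ) (ω : Ω) : ℝ :=
  u t ⬝ᵥ (C *ᵥ state A B u w t ω) + z t ω

/-- Index type for the combined noise family `(w_t) ∪ (z_t)`. -/
abbrev NoiseType (n : ℕ) : ℕ ⊕ ℕ → Type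
  | Sum.inl _ => Fin n → ℝ
  | Sum.inr _ => ℝ

instance (n : ℕ) : ∀ i, MeasurableSpace (NoiseType n i)
  | Sum.inl _ => inferInstanceAs (MeasurableSpace (Fin n → ℝ))
  | Sum.inr _ => inferInstanceAs (MeasurableSpace ℝ)

/-- The combined noise family. -/
def noiseFun {Ω : Type*} {n : ℕ} (w : ℕ → Ω → Fin n → ℝ) (z : ℕ → Ω → ℝ) :
    ∀ i : ℕ ⊕ ℕ, Ω → NoiseType n i
  | Sum.inl t => w t
  | Sum.inr t => z t

/-- Noise assumption: the family `(w_t) ∪ (z_t)` is mutually independent, the `w_t`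
are identically distributed, centered, with covariance `Sw`, and the `z_t` are
identically distributed, centered, with variance `σz²`. -/
structure NoiseAssumption {Ω : Type*} [MeasurableSpace Ω] {n : ℕ} (μ : Measure Ω)
    (w : ℕ → Ω → Fin n → ℝ) (z : ℕ → Ω → ℝ)
    (Sw : Matrix (Fin n) (Fin n) ℝ) (σz : ℝ) : Prop where
  meas_w : ∀ t, Measurable (w t)
  meas_z : ∀ t, Measurable (z t)
  indep : iIndepFun (noiseFun w z) μ
  ident_w : ∀ s t, IdentDistrib (w s) (w t) μ μ
  ident_z : ∀ s t, IdentDistrib (z s) (z t) μ μ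
  int_w : ∀ t i, Integrable (fun ω => w t ω i) μ
  mean_w : ∀ t i, ∫ ω, w t ω i ∂μ = 0
  int_ww : ∀ t i j, Integrable (fun ω => w t ω i * w t ω j) μ
  cov_w : ∀ t i j, ∫ ω, w t ω i * w t ω j ∂μ = Sw i j
  int_z : ∀ t, Integrable (z t) μ
  mean_z : ∀ t, ∫ ω, z t ω ∂μ = 0
  int_zz : ∀ t, Integrable (fun ω => z t ω ^ 2) μ
  var_z : ∀ t, ∫ ω, z t ω ^ 2 ∂μ = σz ^ 2

/-- The infinite-horizon controllability Gramian `Γ_w^∞ = Σ_{i=0}^∞ Aⁱ Sw (Aⁱ)ᵀ`. -/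
def gramInf {n : ℕ} (A Sw : Matrix (Fin n) (Fin n) ℝ) : Matrix (Fin n) (Fin n) ℝ :=
  ∑' i : ℕ, A ^ i * Sw * (A ^ i)ᵀ

/-- The Markov parameter matrix `G = [CB, CAB, …, CA^{L-1}B]`, block `k` being `C Aᵏ B`. -/
def markovG {n p : ℕ} (L : ℕ) (A : Matrix (Fin n) (Fin n) ℝ)
    (B : Matrix (Fin n) (Fin p) ℝ) (C : Matrix (Fin p) (Fin n) ℝ) :
    Matrix (Fin p) (Fin L × Fin p) ℝ :=
  Matrix.of fun i k => (C * A ^ (k.1 : ℕ) * B) i k.2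

/-- The matrix `F = [C, CA, …, CA^{L-1}]`, block `k` being `C Aᵏ`. -/
def markovF {n p : ℕ} (L : ℕ) (A : Matrix (Fin n) (Fin n) ℝ)
    (C : Matrix (Fin p) (Fin n) ℝ) : Matrix (Fin p) (Fin L × Fin n) ℝ :=
  Matrix.of fun i k => (C * A ^ (k.1 : ℕ)) i k.2

/-- Column-major vectorization of a `p × κ` matrix: `vec(M)_(a,b) = M b a`,
so that `uᵀ M ū = (ū ⊗ u) ⬝ᵥ vec(M)`. -/
def vecOf {p : ℕ} {κ : Type*} (M : Matrix (Fin p) κ ℝ) : κ × Fin p → ℝ :=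
  fun i => M i.2 i.1

/-- The design matrix `Ũ` whose row `s` (corresponding to `t = L+1+s`) is
`(ū_{t-1} ⊗ u_t)ᵀ`. -/
def designU {p : ℕ} (L T : ℕ) (u : ℕ → Fin p → ℝ) :
    Matrix (Fin (T - L)) ((Fin L × Fin p) × Fin p) ℝ :=
  Matrix.of fun s => vkron (ubar L u (L + (s : ℕ))) (u (L + (s : ℕ) + 1))

/-- The noise history vector `w̄_t = (w_t, w_{t-1}, …, w_{t-L+1})`. -/
def wbar {Ω : Type*} {n : ℕ} (L : ℕ) (w : ℕ → Ω → Fin n → ℝ) (t : ℕ) (ω : Ω) :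
    Fin L × Fin n → ℝ :=
  fun i => w (t - (i.1 : ℕ)) ω i.2

/-- The effective noise
`ζ_t = (w̄_{t-1} ⊗ u_t)ᵀ vec(F) + u_tᵀ C Aᴸ x_{t-L} + z_t`. -/
def zeta {Ω : Type*} {n p : ℕ} (L : ℕ) (A : Matrix (Fin n) (Fin n) ℝ)
    (B : Matrix (Fin n) (Fin p) ℝ) (C : Matrix (Fin p) (Fin n) ℝ)
    (u : ℕ → Fin p → ℝ) (w : ℕ → Ω → Fin n → ℝ) (z : ℕ → Ω → ℝ)
    (t : ℕ) (ω : Ω) : ℝ :=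
  vkron (wbar L w (t - 1) ω) (u t) ⬝ᵥ vecOf (markovF L A C)
    + u t ⬝ᵥ ((C * A ^ L) *ᵥ state A B u w (t - L) ω)
    + z t ω


/-! ### Auxiliary lemmas -/

set_option linter.unusedSectionVars false
set_option maxHeartbeats 1000000

section NormLemmas

lemma specNorm_eq' {m k : Type*} [Fintype m] [Fintype k] [DecidableEq k]
    (M : Matrix m k ℝ) :
    specNorm M = @norm _ (Matrix.instL2OpNormedAddCommGroup).toNorm M := rfl

lemma vecNorm_eq' {k : Type*} [Fintype k] (v : k → ℝ) :
    vecNorm v = ‖(WithLp.equiv 2 (k → ℝ)).symm v‖ := by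
  rw [EuclideanSpace.norm_eq, vecNorm]
  congr 1
  exact Finset.sum_congr rfl fun i _ => by rw [Real.norm_eq_abs, sq_abs]; rfl

lemma vecNorm_nonneg {k : Type*} [Fintype k] (v : k → ℝ) : 0 ≤ vecNorm v :=
  Real.sqrt_nonneg _

lemma specNorm_nonneg {m k : Type*} [Fintype m] [Fintype k] [DecidableEq k]
    (M : Matrix m k ℝ) : 0 ≤ specNorm M := norm_nonneg _

lemma vecNorm_mulVec_le {m k : Type*} [Fintype m] [Fintype k] [DecidableEq k]
    (M : Matrix m k ℝ) (v : k → ℝ) :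
    vecNorm (M *ᵥ v) ≤ specNorm M * vecNorm v := by
  rw [vecNorm_eq', vecNorm_eq', specNorm_eq']
  exact M.l2_opNorm_mulVec ((WithLp.equiv 2 (k → ℝ)).symm v)

lemma abs_dotProduct_le {k : Type*} [Fintype k] (v y : k → ℝ) :
    |v ⬝ᵥ y| ≤ vecNorm v * vecNorm y := by
  have h : v ⬝ᵥ y = inner ℝ ((WithLp.equiv 2 (k → ℝ)).symm v) ((WithLp.equiv 2 (k → ℝ)).symm y) := by
    rw [PiLp.inner_apply]; exact Finset.sum_congr rfl fun i _ => by simp [mul_comm]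
  rw [h, vecNorm_eq', vecNorm_eq']
  exact abs_real_inner_le_norm _ _

lemma dotProduct_le {k : Type*} [Fintype k] (v y : k → ℝ) :
    v ⬝ᵥ y ≤ vecNorm v * vecNorm y :=
  (le_abs_self _).trans (abs_dotProduct_le v y)

lemma quadForm_le_specNorm {k : Type*} [Fintype k] [DecidableEq k]
    (M : Matrix k k ℝ) (v : k → ℝ) :
    v ⬝ᵥ (M *ᵥ v) ≤ specNorm M * vecNorm v ^ 2 := by
  calc v ⬝ᵥ (M *ᵥ v) ≤ vecNorm v * vecNorm (M *ᵥ v) := dotProduct_le _ _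
    _ ≤ vecNorm v * (specNorm M * vecNorm v) :=
        mul_le_mul_of_nonneg_left (vecNorm_mulVec_le _ _) (vecNorm_nonneg _)
    _ = specNorm M * vecNorm v ^ 2 := by ring

lemma specNorm_transpose {m k : Type*} [Fintype m] [Fintype k] [DecidableEq m] [DecidableEq k]
    (M : Matrix m k ℝ) : specNorm Mᵀ = specNorm M := by
  rw [specNorm_eq', specNorm_eq', ← Matrix.conjTranspose_eq_transpose_of_trivial]
  exact M.l2_opNorm_conjTranspose

lemma specNorm_mul_le {m k l : Type*} [Fintype m] [Fintype k] [Fintype l]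
    [DecidableEq k] [DecidableEq l] (M : Matrix m k ℝ) (N : Matrix k l ℝ) :
    specNorm (M * N) ≤ specNorm M * specNorm N := by
  rw [specNorm_eq', specNorm_eq', specNorm_eq']
  exact M.l2_opNorm_mul N

lemma vecNorm_single {k : Type*} [Fintype k] [DecidableEq k] (b : k) :
    vecNorm (Pi.single b (1:ℝ)) = 1 := by
  have h : ∑ i, (Pi.single b (1:ℝ) i) ^ 2 = (1:ℝ) := by
    simp [Pi.single_apply, ite_pow]
  rw [vecNorm, h, Real.sqrt_one]

lemma abs_entry_le_specNorm {k : Type*} [Fintype k] [DecidableEq k]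
    (M : Matrix k k ℝ) (a b : k) : |M a b| ≤ specNorm M := by
  have h1 : M a b = Pi.single a (1:ℝ) ⬝ᵥ (M *ᵥ Pi.single b (1:ℝ)) := by
    simp [Matrix.mulVec_single, dotProduct, Pi.single_apply, Finset.sum_ite_eq']
  rw [h1]
  calc |Pi.single a (1:ℝ) ⬝ᵥ (M *ᵥ Pi.single b 1)|
      ≤ vecNorm (Pi.single a (1:ℝ)) * vecNorm (M *ᵥ Pi.single b 1) := abs_dotProduct_le _ _
    _ ≤ 1 * (specNorm M * vecNorm (Pi.single b (1:ℝ))) := by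
        rw [vecNorm_single]
        exact mul_le_mul_of_nonneg_left (vecNorm_mulVec_le _ _) one_pos.le
    _ = specNorm M := by rw [vecNorm_single]; ring

end NormLemmas

section StateLemmas

/-- The deterministic part of the state. -/
def xdet {n p : ℕ} (A : Matrix (Fin n) (Fin n) ℝ)
    (B : Matrix (Fin n) (Fin p) ℝ) (u : ℕ → Fin p → ℝ) : ℕ → Fin n → ℝ
  | 0 => 0
  | t + 1 => A *ᵥ xdet A B u t + B *ᵥ u t

lemma state_eq {Ω : Type*} {n p : ℕ} (A : Matrix (Fin n) (Fin n) ℝ)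
    (B : Matrix (Fin n) (Fin p) ℝ) (u : ℕ → Fin p → ℝ) (w : ℕ → Ω → Fin n → ℝ)
    (t : ℕ) (ω : Ω) :
    state A B u w t ω = xdet A B u t + ∑ s ∈ Finset.range t, (A ^ (t - 1 - s)) *ᵥ w s ω := by
  induction t with
  | zero => simp [state, xdet]
  | succ t ih =>
    rw [show state A B u w (t+1) ω = A *ᵥ state A B u w t ω + B *ᵥ u t + w t ω from rfl, ih]
    rw [show xdet A B u (t+1) = A *ᵥ xdet A B u t + B *ᵥ u t from rfl]
    rw [Finset.sum_range_succ]
    have h1 : A *ᵥ (xdet A B u t + ∑ s ∈ Finset.range t, (A ^ (t - 1 - s)) *ᵥ w s ω)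
        = A *ᵥ xdet A B u t + ∑ s ∈ Finset.range t, (A ^ (t - s)) *ᵥ w s ω := by
      rw [Matrix.mulVec_add]
      rw [show A *ᵥ (∑ s ∈ Finset.range t, (A ^ (t - 1 - s)) *ᵥ w s ω)
          = ∑ s ∈ Finset.range t, A *ᵥ ((A ^ (t - 1 - s)) *ᵥ w s ω) from
        map_sum (Matrix.mulVecLin A) _ _]
      congr 1
      apply Finset.sum_congr rfl
      intro s hs
      rw [Matrix.mulVec_mulVec, ← pow_succ']
      have : t - 1 - s + 1 = t - s := by
        simp only [Finset.mem_range] at hs; omega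
      rw [this]
    rw [h1]
    have h2 : ∀ s ∈ Finset.range t, (A ^ (t + 1 - 1 - s)) *ᵥ w s ω = (A ^ (t - s)) *ᵥ w s ω := by
      intro s hs; norm_num
    rw [Finset.sum_congr rfl h2]
    have h3 : t + 1 - 1 - t = 0 := by omega
    rw [h3, pow_zero, Matrix.one_mulVec]
    abel

lemma term1_eq {Ω : Type*} {n p L : ℕ} (A : Matrix (Fin n) (Fin n) ℝ)
    (C : Matrix (Fin p) (Fin n) ℝ) (u : ℕ → Fin p → ℝ) (w : ℕ → Ω → Fin n → ℝ)
    (τ : ℕ) (ω : Ω) :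
    vkron (wbar L w τ ω) (u (τ+1)) ⬝ᵥ vecOf (markovF L A C)
      = ∑ i : Fin L, ((C * A ^ (i : ℕ))ᵀ *ᵥ u (τ+1)) ⬝ᵥ w (τ - (i : ℕ)) ω := by
  simp only [dotProduct, vkron, vecOf, markovF, wbar, Matrix.mulVec, Matrix.transpose_apply,
    Fintype.sum_prod_type, Matrix.of_apply, Finset.sum_mul, Finset.mul_sum]
  apply Finset.sum_congr rfl; intro i _
  apply Finset.sum_congr rfl; intro a _
  apply Finset.sum_congr rfl; intro b _
  ring

lemma term1_reindex {Ω : Type*} {n p L : ℕ} (A : Matrix (Fin n) (Fin n) ℝ)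
    (C : Matrix (Fin p) (Fin n) ℝ) (u : ℕ → Fin p → ℝ) (w : ℕ → Ω → Fin n → ℝ)
    (τ : ℕ) (hτ : L ≤ τ) (ω : Ω) :
    ∑ i : Fin L, ((C * A ^ (i : ℕ))ᵀ *ᵥ u (τ+1)) ⬝ᵥ w (τ - (i : ℕ)) ω
      = ∑ t ∈ Finset.Ico (τ+1-L) (τ+1), ((C * A ^ (τ - t))ᵀ *ᵥ u (τ+1)) ⬝ᵥ w t ω := by
  rw [Fin.sum_univ_eq_sum_range (fun i => ((C * A ^ i)ᵀ *ᵥ u (τ+1)) ⬝ᵥ w (τ - i) ω) L]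
  apply Finset.sum_bij' (fun i _ => τ - i) (fun t _ => τ - t)
  · intro i hi; simp only [Finset.mem_range] at hi; simp only [Finset.mem_Ico]; omega
  · intro t ht; simp only [Finset.mem_Ico] at ht; simp only [Finset.mem_range]; omega
  · intro i hi; simp only [Finset.mem_range] at hi; omega
  · intro t ht; simp only [Finset.mem_Ico] at ht; omega
  · intro i hi; simp only [Finset.mem_range] at hi
    have h : τ - (τ - i) = i := by omega
    rw [h]

lemma zeta_eq {Ω : Type*} {n p L : ℕ} (hL : 1 ≤ L)
    (A : Matrix (Fin n) (Fin n) ℝ) (B : Matrix (Fin n) (Fin p) ℝ)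
    (C : Matrix (Fin p) (Fin n) ℝ) (u : ℕ → Fin p → ℝ)
    (w : ℕ → Ω → Fin n → ℝ) (z : ℕ → Ω → ℝ)
    (τ : ℕ) (hτ : L ≤ τ) (ω : Ω) :
    zeta L A B C u w z (τ+1) ω
      = u (τ+1) ⬝ᵥ ((C * A ^ L) *ᵥ xdet A B u (τ+1-L))
        + ∑ t ∈ Finset.range (τ+1), ((C * A ^ (τ - t))ᵀ *ᵥ u (τ+1)) ⬝ᵥ w t ω
        + z (τ+1) ω := by
  have hsub : τ + 1 - 1 = τ := by omega
  rw [zeta, hsub, term1_eq, term1_reindex A C u w τ hτ ω, state_eq]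
  rw [Matrix.mulVec_add, dotProduct_add]
  have hterm2 : u (τ+1) ⬝ᵥ ((C * A ^ L) *ᵥ ∑ s ∈ Finset.range (τ+1-L), (A ^ (τ+1-L - 1 - s)) *ᵥ w s ω)
      = ∑ t ∈ Finset.range (τ+1-L), ((C * A ^ (τ - t))ᵀ *ᵥ u (τ+1)) ⬝ᵥ w t ω := by
    rw [show (C * A ^ L) *ᵥ ∑ s ∈ Finset.range (τ+1-L), (A ^ (τ+1-L-1-s)) *ᵥ w s ω
        = ∑ s ∈ Finset.range (τ+1-L), (C * A ^ L) *ᵥ ((A ^ (τ+1-L-1-s)) *ᵥ w s ω) from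
      map_sum (Matrix.mulVecLin (C * A ^ L)) _ _]
    rw [show u (τ+1) ⬝ᵥ (∑ s ∈ Finset.range (τ+1-L), (C * A ^ L) *ᵥ ((A ^ (τ+1-L-1-s)) *ᵥ w s ω))
        = ∑ s ∈ Finset.range (τ+1-L), u (τ+1) ⬝ᵥ ((C * A ^ L) *ᵥ ((A ^ (τ+1-L-1-s)) *ᵥ w s ω)) by
      simp only [dotProduct, Finset.sum_apply, Finset.mul_sum]
      exact Finset.sum_comm]
    apply Finset.sum_congr rfl
    intro s hs
    simp only [Finset.mem_range] at hs
    rw [Matrix.mulVec_mulVec, Matrix.mul_assoc, ← pow_add]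
    have h : L + (τ+1-L-1-s) = τ - s := by omega
    rw [h, dotProduct_mulVec, ← Matrix.vecMul_transpose, Matrix.transpose_transpose]
  rw [hterm2]
  rw [show Finset.range (τ+1) = Finset.Ico 0 (τ+1) from Finset.range_eq_Ico (τ+1)]
  rw [← Finset.sum_Ico_consecutive _ (Nat.zero_le (τ+1-L)) (by omega : τ+1-L ≤ τ+1)]
  rw [← Finset.range_eq_Ico]
  ring

end StateLemmas

section ProbLemmas

variable {Ω : Type*} [MeasurableSpace Ω] {μ : Measure Ω} [IsProbabilityMeasure μ]
  {n : ℕ} {w : ℕ → Ω → Fin n → ℝ} {z : ℕ → Ω → ℝ}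
  {Sw : Matrix (Fin n) (Fin n) ℝ} {σz : ℝ}

variable (hn : NoiseAssumption μ w z Sw σz) (g : ℕ → Fin n → ℝ)
include hn

lemma int_X (t : ℕ) : Integrable (fun ω => g t ⬝ᵥ w t ω) μ := by
  simp only [dotProduct]
  exact integrable_finset_sum _ fun a _ => (hn.int_w t a).const_mul _

lemma integral_X (t : ℕ) : ∫ ω, g t ⬝ᵥ w t ω ∂μ = 0 := by
  simp only [dotProduct]
  rw [integral_finset_sum _ fun a _ => (hn.int_w t a).const_mul _]
  simp [integral_const_mul, hn.mean_w]

lemma int_cc (t : ℕ) (a b : Fin n) (c d : ℝ) :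
    Integrable (fun ω => c * w t ω a * (d * w t ω b)) μ := by
  have h : (fun ω => c * w t ω a * (d * w t ω b))
      = fun ω => (c * d) * (w t ω a * w t ω b) := by funext ω; ring
  rw [h]
  exact (hn.int_ww t a b).const_mul _

lemma integral_cc (t : ℕ) (a b : Fin n) (c d : ℝ) :
    ∫ ω, c * w t ω a * (d * w t ω b) ∂μ = c * d * Sw a b := by
  have h : (fun ω => c * w t ω a * (d * w t ω b))
      = fun ω => (c * d) * (w t ω a * w t ω b) := by funext ω; ring
  rw [h, integral_const_mul, hn.cov_w t a b]

lemma sw_symm (a b : Fin n) : Sw a b = Sw b a := by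
  rw [← hn.cov_w 0 a b, ← hn.cov_w 0 b a]
  congr 1; funext ω; ring

lemma int_XX (t : ℕ) : Integrable (fun ω => (g t ⬝ᵥ w t ω) * (g t ⬝ᵥ w t ω)) μ := by
  simp only [dotProduct, Finset.sum_mul, Finset.mul_sum]
  refine integrable_finset_sum _ fun a _ => integrable_finset_sum _ fun b _ => ?_
  first
  | exact int_cc hn t a b _ _
  | exact int_cc hn t b a _ _

lemma integral_XX (t : ℕ) :
    ∫ ω, (g t ⬝ᵥ w t ω) * (g t ⬝ᵥ w t ω) ∂μ = g t ⬝ᵥ (Sw *ᵥ g t) := by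
  simp only [dotProduct, Finset.sum_mul, Finset.mul_sum]
  rw [integral_finset_sum _ (fun a _ => integrable_finset_sum _ fun b _ => by
    first
    | exact int_cc hn t a b _ _
    | exact int_cc hn t b a _ _)]
  simp only [Matrix.mulVec, dotProduct, Finset.mul_sum]
  apply Finset.sum_congr rfl
  intro a _
  rw [integral_finset_sum _ (fun b _ => by
    first
    | exact int_cc hn t a b _ _
    | exact int_cc hn t b a _ _)]
  apply Finset.sum_congr rfl
  intro b _
  first
  | rw [integral_cc hn t a b]; ring
  | rw [integral_cc hn t b a, sw_symm hn b a]; ring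

lemma sw_psd (x : Fin n → ℝ) : 0 ≤ x ⬝ᵥ (Sw *ᵥ x) := by
  have h := integral_XX hn (fun _ => x) 0
  rw [← h]
  exact integral_nonneg fun ω => mul_self_nonneg _

lemma indep_X_X {s t : ℕ} (hst : s ≠ t) :
    IndepFun (fun ω => g s ⬝ᵥ w s ω) (fun ω => g t ⬝ᵥ w t ω) μ := by
  have h := hn.indep.indepFun (show (Sum.inl s : ℕ ⊕ ℕ) ≠ Sum.inl t by simp [hst])
  have hm : ∀ r : ℕ, Measurable (fun v : Fin n → ℝ => g r ⬝ᵥ v) := by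
    intro r
    simp only [dotProduct]
    exact Finset.measurable_sum _ fun a _ => (measurable_pi_apply a).const_mul _
  exact h.comp (hm s) (hm t)

lemma indep_X_Z (t r : ℕ) :
    IndepFun (fun ω => g t ⬝ᵥ w t ω) (z r) μ := by
  have h := hn.indep.indepFun (show (Sum.inl t : ℕ ⊕ ℕ) ≠ Sum.inr r by simp)
  have hm : Measurable (fun v : Fin n → ℝ => g t ⬝ᵥ v) := by
    simp only [dotProduct]
    exact Finset.measurable_sum _ fun a _ => (measurable_pi_apply a).const_mul _
  exact h.comp hm measurable_id

lemma integral_X_mul_X {s t : ℕ} (hst : s ≠ t) :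
    ∫ ω, (g s ⬝ᵥ w s ω) * (g t ⬝ᵥ w t ω) ∂μ = 0 := by
  rw [show (fun ω => (g s ⬝ᵥ w s ω) * (g t ⬝ᵥ w t ω))
      = (fun ω => g s ⬝ᵥ w s ω) * (fun ω => g t ⬝ᵥ w t ω) from rfl]
  rw [(indep_X_X hn g hst).integral_mul_eq_mul_integral (int_X hn g s).aestronglyMeasurable (int_X hn g t).aestronglyMeasurable,
    integral_X hn g s, zero_mul]

lemma int_X_mul_X {s t : ℕ} (hst : s ≠ t) :
    Integrable (fun ω => (g s ⬝ᵥ w s ω) * (g t ⬝ᵥ w t ω)) μ :=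
  (indep_X_X hn g hst).integrable_mul (int_X hn g s) (int_X hn g t)

lemma integral_X_mul_Z (t r : ℕ) : ∫ ω, (g t ⬝ᵥ w t ω) * z r ω ∂μ = 0 := by
  rw [show (fun ω => (g t ⬝ᵥ w t ω) * z r ω)
      = (fun ω => g t ⬝ᵥ w t ω) * z r from rfl]
  rw [(indep_X_Z hn g t r).integral_mul_eq_mul_integral (int_X hn g t).aestronglyMeasurable (hn.int_z r).aestronglyMeasurable,
    integral_X hn g t, zero_mul]

lemma int_X_mul_Z (t r : ℕ) : Integrable (fun ω => (g t ⬝ᵥ w t ω) * z r ω) μ :=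
  (indep_X_Z hn g t r).integrable_mul (int_X hn g t) (hn.int_z r)

lemma integral_XX' (s t : ℕ) :
    ∫ ω, (g s ⬝ᵥ w s ω) * (g t ⬝ᵥ w t ω) ∂μ
      = if s = t then g t ⬝ᵥ (Sw *ᵥ g t) else 0 := by
  by_cases h : s = t
  · subst h; rw [if_pos rfl]; exact integral_XX hn g s
  · rw [if_neg h]; exact integral_X_mul_X hn g h

lemma int_XX' (s t : ℕ) :
    Integrable (fun ω => (g s ⬝ᵥ w s ω) * (g t ⬝ᵥ w t ω)) μ := by
  by_cases h : s = t
  · subst h; exact int_XX hn g s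
  · exact int_X_mul_X hn g h

/-- Main variance identity. -/
lemma var_eq (K : ℝ) (N r : ℕ) :
    ∫ ω, (K + ∑ t ∈ Finset.range N, (g t ⬝ᵥ w t ω) + z r ω) ^ 2 ∂μ
      - (∫ ω, (K + ∑ t ∈ Finset.range N, (g t ⬝ᵥ w t ω) + z r ω) ∂μ) ^ 2
    = ∑ t ∈ Finset.range N, g t ⬝ᵥ (Sw *ᵥ g t) + σz ^ 2 := by
  set S : Ω → ℝ := fun ω => ∑ t ∈ Finset.range N, (g t ⬝ᵥ w t ω) with hS
  have hSint : Integrable S μ := integrable_finset_sum _ fun t _ => int_X hn g t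
  have hSmean : ∫ ω, S ω ∂μ = 0 := by
    rw [hS, integral_finset_sum _ fun t _ => int_X hn g t]
    simp [integral_X hn g]
  have i1 : Integrable (fun ω => K + S ω) μ := (integrable_const K).add hSint
  have hmean : ∫ ω, (K + S ω + z r ω) ∂μ = K := by
    rw [integral_add i1 (hn.int_z r), integral_add (integrable_const K) hSint,
      integral_const, hSmean, hn.mean_z r]
    simp
  have hsq : ∀ ω, (K + S ω + z r ω) ^ 2
      = K ^ 2 + 2 * K * S ω + 2 * K * z r ω
        + (∑ s ∈ Finset.range N, ∑ t ∈ Finset.range N, (g s ⬝ᵥ w s ω) * (g t ⬝ᵥ w t ω))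
        + 2 * (∑ t ∈ Finset.range N, (g t ⬝ᵥ w t ω) * z r ω)
        + z r ω ^ 2 := by
    intro ω
    have h1 : S ω * S ω = ∑ s ∈ Finset.range N, ∑ t ∈ Finset.range N,
        (g s ⬝ᵥ w s ω) * (g t ⬝ᵥ w t ω) := by
      rw [hS]; rw [Finset.sum_mul_sum]
    have h2 : S ω * z r ω = ∑ t ∈ Finset.range N, (g t ⬝ᵥ w t ω) * z r ω := by
      rw [hS, Finset.sum_mul]
    nlinarith [h1, h2]
  have hint2 : Integrable (fun ω => ∑ s ∈ Finset.range N, ∑ t ∈ Finset.range N,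
      (g s ⬝ᵥ w s ω) * (g t ⬝ᵥ w t ω)) μ :=
    integrable_finset_sum _ fun s _ => integrable_finset_sum _ fun t _ => int_XX' hn g s t
  have hint3 : Integrable (fun ω => ∑ t ∈ Finset.range N, (g t ⬝ᵥ w t ω) * z r ω) μ :=
    integrable_finset_sum _ fun t _ => int_X_mul_Z hn g t r
  have hintsq : ∫ ω, (K + S ω + z r ω) ^ 2 ∂μ
      = K ^ 2 + ∑ t ∈ Finset.range N, g t ⬝ᵥ (Sw *ᵥ g t) + σz ^ 2 := by
    rw [integral_congr_ae (Filter.Eventually.of_forall hsq)]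
    have j1 : Integrable (fun ω => K ^ 2 + 2 * K * S ω) μ :=
      (integrable_const _).add (hSint.const_mul _)
    have j2 : Integrable (fun ω => K ^ 2 + 2 * K * S ω + 2 * K * z r ω) μ :=
      j1.add ((hn.int_z r).const_mul _)
    have j3 : Integrable (fun ω => K ^ 2 + 2 * K * S ω + 2 * K * z r ω
        + ∑ s ∈ Finset.range N, ∑ t ∈ Finset.range N, (g s ⬝ᵥ w s ω) * (g t ⬝ᵥ w t ω)) μ :=
      j2.add hint2
    have j4 : Integrable (fun ω => K ^ 2 + 2 * K * S ω + 2 * K * z r ω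
        + (∑ s ∈ Finset.range N, ∑ t ∈ Finset.range N, (g s ⬝ᵥ w s ω) * (g t ⬝ᵥ w t ω))
        + 2 * ∑ t ∈ Finset.range N, (g t ⬝ᵥ w t ω) * z r ω) μ :=
      j3.add (hint3.const_mul _)
    rw [integral_add j4 (hn.int_zz r), integral_add j3 (hint3.const_mul _),
      integral_add j2 hint2, integral_add j1 ((hn.int_z r).const_mul _),
      integral_add (integrable_const _) (hSint.const_mul _)]
    rw [integral_const, integral_const_mul, hSmean, integral_const_mul, hn.mean_z r]
    rw [integral_finset_sum _ fun s _ => integrable_finset_sum _ fun t _ => int_XX' hn g s t]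
    rw [integral_const_mul]
    rw [integral_finset_sum _ fun t _ => int_X_mul_Z hn g t r]
    have hds : ∑ s ∈ Finset.range N, ∫ ω, ∑ t ∈ Finset.range N,
        (g s ⬝ᵥ w s ω) * (g t ⬝ᵥ w t ω) ∂μ = ∑ t ∈ Finset.range N, g t ⬝ᵥ (Sw *ᵥ g t) := by
      rw [Finset.sum_congr rfl fun s hs => integral_finset_sum _ fun t _ => int_XX' hn g s t]
      rw [Finset.sum_congr rfl (fun s hs => Finset.sum_congr rfl fun t ht =>
        integral_XX' hn g s t)]
      simp only [Finset.sum_ite_eq, Finset.mem_range]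
      apply Finset.sum_congr rfl
      intro s hs
      simp only [Finset.mem_range] at hs
      rw [if_pos hs]
    rw [hds]
    simp only [integral_X_mul_Z hn g, Finset.sum_const_zero, hn.var_z r, measure_univ, probReal_univ,
      ENNReal.toReal_one, one_smul, mul_zero]
    ring
  rw [hintsq, hmean]
  ring

end ProbLemmas

section GramLemmas

def quadHom {k : Type*} [Fintype k] (v : k → ℝ) : Matrix k k ℝ →+ ℝ where
  toFun := fun M => v ⬝ᵥ (M *ᵥ v)
  map_zero' := by simp
  map_add' := fun M N => by
    show v ⬝ᵥ ((M + N) *ᵥ v) = v ⬝ᵥ (M *ᵥ v) + v ⬝ᵥ (N *ᵥ v)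
    rw [Matrix.add_mulVec, dotProduct_add]

lemma quadHom_cont {k : Type*} [Fintype k] (v : k → ℝ) :
    Continuous (quadHom (k := k) v) := by
  simp only [quadHom, AddMonoidHom.coe_mk, ZeroHom.coe_mk, dotProduct, Matrix.mulVec]
  apply continuous_finset_sum
  intro a _
  apply Continuous.mul continuous_const
  apply continuous_finset_sum
  intro b _
  exact (continuous_id.matrix_elem a b).mul continuous_const

variable {n : ℕ} (A Sw : Matrix (Fin n) (Fin n) ℝ)
variable (ρ φ : ℝ) (hρ : ρ ∈ Set.Ioo (0:ℝ) 1)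
  (hstab : ∀ k : ℕ, specNorm (A ^ k) ≤ φ * ρ ^ k)

include hρ hstab

lemma specNorm_term_le (j : ℕ) :
    specNorm (A ^ j * Sw * (A ^ j)ᵀ) ≤ (specNorm Sw * φ ^ 2) * (ρ ^ 2) ^ j := by
  have h0 : 0 ≤ φ := le_trans (specNorm_nonneg (A ^ 0)) (by simpa using hstab 0)
  have h1 := specNorm_mul_le (A ^ j * Sw) ((A ^ j)ᵀ)
  have h2 := specNorm_mul_le (A ^ j) Sw
  have h3 : specNorm ((A ^ j)ᵀ) = specNorm (A ^ j) := specNorm_transpose _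
  have h4 := hstab j
  have h5 : (0:ℝ) ≤ ρ ^ j := pow_nonneg hρ.1.le j
  have hssw := specNorm_nonneg Sw
  have hsj := specNorm_nonneg (A ^ j)
  calc specNorm (A ^ j * Sw * (A ^ j)ᵀ) ≤ specNorm (A ^ j * Sw) * specNorm ((A ^ j)ᵀ) := h1
    _ ≤ specNorm (A ^ j) * specNorm Sw * specNorm (A ^ j) := by
        rw [h3]
        exact mul_le_mul_of_nonneg_right h2 hsj
    _ ≤ (φ * ρ ^ j) * specNorm Sw * (φ * ρ ^ j) := by
        apply mul_le_mul (mul_le_mul_of_nonneg_right h4 hssw) h4 hsj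
        positivity
    _ = (specNorm Sw * φ ^ 2) * (ρ ^ 2) ^ j := by ring

lemma summable_gram : Summable (fun j : ℕ => A ^ j * Sw * (A ^ j)ᵀ) := by
  apply Pi.summable.mpr
  intro a
  rw [Pi.summable]
  intro b
  apply Summable.of_norm_bounded (g := fun j => (specNorm Sw * φ ^ 2) * (ρ ^ 2) ^ j)
  · apply Summable.mul_left
    exact summable_geometric_of_lt_one (by positivity) (by nlinarith [hρ.1, hρ.2])
  · intro j
    exact le_trans (abs_entry_le_specNorm _ a b) (specNorm_term_le A Sw ρ φ hρ hstab j)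

lemma hasSum_gram : HasSum (fun j : ℕ => A ^ j * Sw * (A ^ j)ᵀ) (gramInf A Sw) :=
  (summable_gram A Sw ρ φ hρ hstab).hasSum

lemma hasSum_quad (v : Fin n → ℝ) :
    HasSum (fun j : ℕ => v ⬝ᵥ ((A ^ j * Sw * (A ^ j)ᵀ) *ᵥ v)) (v ⬝ᵥ (gramInf A Sw *ᵥ v)) :=
  (hasSum_gram A Sw ρ φ hρ hstab).map (quadHom v) (quadHom_cont v)

end GramLemmas

lemma frob_bound {n p : ℕ} (L : ℕ) (A : Matrix (Fin n) (Fin n) ℝ)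
    (C : Matrix (Fin p) (Fin n) ℝ) (x : Fin p → ℝ) :
    ∑ i ∈ Finset.range L, vecNorm ((C * A ^ i)ᵀ *ᵥ x) ^ 2
      ≤ frobNorm (markovF L A C) ^ 2 * vecNorm x ^ 2 := by
  have hx : vecNorm x ^ 2 = ∑ b, x b ^ 2 :=
    Real.sq_sqrt (Finset.sum_nonneg fun b _ => sq_nonneg _)
  have hF : frobNorm (markovF L A C) ^ 2
      = ∑ b, ∑ k : Fin L × Fin n, ((C * A ^ (k.1 : ℕ)) b k.2) ^ 2 := by
    rw [frobNorm, Real.sq_sqrt]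
    · rfl
    · exact Finset.sum_nonneg fun b _ => Finset.sum_nonneg fun k _ => sq_nonneg _
  have hv : ∀ i : ℕ, vecNorm ((C * A ^ i)ᵀ *ᵥ x) ^ 2
      = ∑ a, (∑ b, (C * A ^ i) b a * x b) ^ 2 := by
    intro i
    rw [vecNorm, Real.sq_sqrt (Finset.sum_nonneg fun a _ => sq_nonneg _)]
    apply Finset.sum_congr rfl
    intro a _
    congr 1
  calc ∑ i ∈ Finset.range L, vecNorm ((C * A ^ i)ᵀ *ᵥ x) ^ 2
      = ∑ i ∈ Finset.range L, ∑ a, (∑ b, (C * A ^ i) b a * x b) ^ 2 :=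
        Finset.sum_congr rfl fun i _ => hv i
    _ ≤ ∑ i ∈ Finset.range L, ∑ a : Fin n,
          (∑ b, ((C * A ^ i) b a) ^ 2) * (∑ b, x b ^ 2) := by
        apply Finset.sum_le_sum
        intro i _
        apply Finset.sum_le_sum
        intro a _
        exact Finset.sum_mul_sq_le_sq_mul_sq _ _ _
    _ = (∑ i ∈ Finset.range L, ∑ a : Fin n, ∑ b, ((C * A ^ i) b a) ^ 2) * (∑ b, x b ^ 2) := by
        rw [Finset.sum_mul]
        exact Finset.sum_congr rfl fun i _ => by rw [Finset.sum_mul]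
    _ = frobNorm (markovF L A C) ^ 2 * vecNorm x ^ 2 := by
        rw [hx, hF]
        congr 1
        rw [← Fin.sum_univ_eq_sum_range (fun i => ∑ a : Fin n, ∑ b, ((C * A ^ i) b a) ^ 2) L]
        simp only [Fintype.sum_prod_type]
        rw [show (∑ i : Fin L, ∑ a : Fin n, ∑ b : Fin p, ((C * A ^ (i:ℕ)) b a) ^ 2)
            = ∑ i : Fin L, ∑ b : Fin p, ∑ a : Fin n, ((C * A ^ (i:ℕ)) b a) ^ 2 from
          Finset.sum_congr rfl fun i _ => Finset.sum_comm]
        exact Finset.sum_comm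

/-- **Variance bound for the effective noise.** For every `τ ≥ L`,
`Var(ζ_{τ+1}) ≤ (‖Σ_w‖ ‖F‖_F² + ‖C Aᴸ‖² ‖Γ_w^∞‖) β² + σ_z²`. -/
theorem effective_noise_variance_bound
    {Ω : Type*} [MeasurableSpace Ω] (μ : Measure Ω) [IsProbabilityMeasure μ]
    {n p L : ℕ} (hL : 1 ≤ L)
    (A : Matrix (Fin n) (Fin n) ℝ) (B : Matrix (Fin n) (Fin p) ℝ)
    (C : Matrix (Fin p) (Fin n) ℝ)
    (u : ℕ → Fin p → ℝ) (w : ℕ → Ω → Fin n → ℝ) (z : ℕ → Ω → ℝ)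
    (Sw : Matrix (Fin n) (Fin n) ℝ) (σz : ℝ)
    (hnoise : NoiseAssumption μ w z Sw σz)
    (ρ φ : ℝ) (hρ : ρ ∈ Set.Ioo (0 : ℝ) 1) (hφ : 1 ≤ φ)
    (hstab : ∀ k : ℕ, specNorm (A ^ k) ≤ φ * ρ ^ k)
    (β : ℝ) (hu : ∀ t, vecNorm (u t) ≤ β)
    (τ : ℕ) (hτ : L ≤ τ) :
    ∫ ω, zeta L A B C u w z (τ + 1) ω ^ 2 ∂μ
        - (∫ ω, zeta L A B C u w z (τ + 1) ω ∂μ) ^ 2 ≤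
      (specNorm Sw * frobNorm (markovF L A C) ^ 2
          + specNorm (C * A ^ L) ^ 2 * specNorm (gramInf A Sw)) * β ^ 2
        + σz ^ 2 := by
  classical
  set g : ℕ → Fin n → ℝ := fun t => (C * A ^ (τ - t))ᵀ *ᵥ u (τ+1) with hg
  set K : ℝ := u (τ+1) ⬝ᵥ ((C * A ^ L) *ᵥ xdet A B u (τ+1-L)) with hK
  have hz : ∀ ω, zeta L A B C u w z (τ+1) ω
      = K + ∑ t ∈ Finset.range (τ+1), (g t ⬝ᵥ w t ω) + z (τ+1) ω := fun ω =>
    zeta_eq hL A B C u w z τ hτ ω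
  have e1 : ∫ ω, zeta L A B C u w z (τ+1) ω ^ 2 ∂μ
      = ∫ ω, (K + ∑ t ∈ Finset.range (τ+1), (g t ⬝ᵥ w t ω) + z (τ+1) ω) ^ 2 ∂μ := by
    apply integral_congr_ae
    filter_upwards with ω
    rw [hz ω]
  have e2 : ∫ ω, zeta L A B C u w z (τ+1) ω ∂μ
      = ∫ ω, (K + ∑ t ∈ Finset.range (τ+1), (g t ⬝ᵥ w t ω) + z (τ+1) ω) ∂μ := by
    apply integral_congr_ae
    filter_upwards with ω
    rw [hz ω]
  rw [e1, e2, var_eq hnoise g K (τ+1) (τ+1)]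
  have hβ0 : (0:ℝ) ≤ β := le_trans (vecNorm_nonneg (u 0)) (hu 0)
  have hβ2 : vecNorm (u (τ+1)) ^ 2 ≤ β ^ 2 := pow_le_pow_left₀ (vecNorm_nonneg _) (hu _) 2
  set q : ℕ → ℝ :=
    fun i => ((C * A ^ i)ᵀ *ᵥ u (τ+1)) ⬝ᵥ (Sw *ᵥ ((C * A ^ i)ᵀ *ᵥ u (τ+1))) with hq
  have hre : ∑ t ∈ Finset.range (τ+1), g t ⬝ᵥ (Sw *ᵥ g t) = ∑ i ∈ Finset.range (τ+1), q i := by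
    rw [← Finset.sum_range_reflect (fun i => q i) (τ+1)]
    apply Finset.sum_congr rfl
    intro t ht
    simp only [Finset.mem_range] at ht
    have h : τ + 1 - 1 - t = τ - t := by omega
    rw [h]
  have hsplit : ∑ i ∈ Finset.range (τ+1), q i
      = ∑ i ∈ Finset.range L, q i + ∑ i ∈ Finset.Ico L (τ+1), q i := by
    rw [show Finset.range (τ+1) = Finset.Ico 0 (τ+1) from Finset.range_eq_Ico (τ+1)]
    rw [← Finset.sum_Ico_consecutive _ (Nat.zero_le L) (by omega : L ≤ τ+1)]
    rw [← Finset.range_eq_Ico]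
  have h1 : ∑ i ∈ Finset.range L, q i
      ≤ specNorm Sw * frobNorm (markovF L A C) ^ 2 * β ^ 2 := by
    calc ∑ i ∈ Finset.range L, q i
        ≤ ∑ i ∈ Finset.range L, specNorm Sw * vecNorm ((C * A ^ i)ᵀ *ᵥ u (τ+1)) ^ 2 :=
          Finset.sum_le_sum fun i _ => quadForm_le_specNorm _ _
      _ = specNorm Sw * ∑ i ∈ Finset.range L, vecNorm ((C * A ^ i)ᵀ *ᵥ u (τ+1)) ^ 2 :=
          (Finset.mul_sum _ _ _).symm
      _ ≤ specNorm Sw * (frobNorm (markovF L A C) ^ 2 * vecNorm (u (τ+1)) ^ 2) :=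
          mul_le_mul_of_nonneg_left (frob_bound L A C _) (specNorm_nonneg _)
      _ ≤ specNorm Sw * (frobNorm (markovF L A C) ^ 2 * β ^ 2) :=
          mul_le_mul_of_nonneg_left
            (mul_le_mul_of_nonneg_left hβ2 (sq_nonneg _)) (specNorm_nonneg _)
      _ = specNorm Sw * frobNorm (markovF L A C) ^ 2 * β ^ 2 := by ring
  set v : Fin n → ℝ := (C * A ^ L)ᵀ *ᵥ u (τ+1) with hv
  have hquad : ∀ j : ℕ, q (L + j) = v ⬝ᵥ ((A ^ j * Sw * (A ^ j)ᵀ) *ᵥ v) := by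
    intro j
    have hA : (C * A ^ (L + j))ᵀ *ᵥ u (τ+1) = (A ^ j)ᵀ *ᵥ v := by
      rw [pow_add, ← Matrix.mul_assoc, Matrix.transpose_mul, ← Matrix.mulVec_mulVec, hv]
    rw [hq]
    simp only []
    rw [hA]
    rw [show (A ^ j * Sw * (A ^ j)ᵀ) *ᵥ v = A ^ j *ᵥ (Sw *ᵥ ((A ^ j)ᵀ *ᵥ v)) by
      rw [← Matrix.mulVec_mulVec, ← Matrix.mulVec_mulVec]]
    rw [dotProduct_mulVec v (A ^ j), ← Matrix.mulVec_transpose]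
  have h2 : ∑ i ∈ Finset.Ico L (τ+1), q i
      ≤ specNorm (C * A ^ L) ^ 2 * specNorm (gramInf A Sw) * β ^ 2 := by
    rw [Finset.sum_Ico_eq_sum_range]
    have hHS := hasSum_quad A Sw ρ φ hρ hstab v
    have hnn : ∀ j : ℕ, 0 ≤ v ⬝ᵥ ((A ^ j * Sw * (A ^ j)ᵀ) *ᵥ v) := by
      intro j
      rw [← hquad j, hq]
      exact sw_psd hnoise _
    calc ∑ j ∈ Finset.range (τ+1-L), q (L + j)
        = ∑ j ∈ Finset.range (τ+1-L), v ⬝ᵥ ((A ^ j * Sw * (A ^ j)ᵀ) *ᵥ v) :=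
          Finset.sum_congr rfl fun j _ => hquad j
      _ ≤ v ⬝ᵥ (gramInf A Sw *ᵥ v) := sum_le_hasSum _ (fun j _ => hnn j) hHS
      _ ≤ specNorm (gramInf A Sw) * vecNorm v ^ 2 := quadForm_le_specNorm _ _
      _ ≤ specNorm (gramInf A Sw) * (specNorm (C * A ^ L) * β) ^ 2 := by
          apply mul_le_mul_of_nonneg_left _ (specNorm_nonneg _)
          have hvb : vecNorm v ≤ specNorm (C * A ^ L) * β := by
            rw [hv]
            calc vecNorm ((C * A ^ L)ᵀ *ᵥ u (τ+1))
                ≤ specNorm ((C * A ^ L)ᵀ) * vecNorm (u (τ+1)) := vecNorm_mulVec_le _ _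
              _ = specNorm (C * A ^ L) * vecNorm (u (τ+1)) := by rw [specNorm_transpose]
              _ ≤ specNorm (C * A ^ L) * β :=
                  mul_le_mul_of_nonneg_left (hu _) (specNorm_nonneg _)
          exact pow_le_pow_left₀ (vecNorm_nonneg _) hvb 2
      _ = specNorm (C * A ^ L) ^ 2 * specNorm (gramInf A Sw) * β ^ 2 := by ring
  rw [hre, hsplit]
  have hfin := add_le_add (add_le_add h1 h2) (le_refl (σz ^ 2))
  calc ∑ i ∈ Finset.range L, q i + ∑ i ∈ Finset.Ico L (τ+1), q i + σz ^ 2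
      ≤ specNorm Sw * frobNorm (markovF L A C) ^ 2 * β ^ 2
        + specNorm (C * A ^ L) ^ 2 * specNorm (gramInf A Sw) * β ^ 2 + σz ^ 2 := hfin
    _ = (specNorm Sw * frobNorm (markovF L A C) ^ 2
          + specNorm (C * A ^ L) ^ 2 * specNorm (gramInf A Sw)) * β ^ 2 + σz ^ 2 := by ring
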